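/- The transitive reduction of a finite DAG is unique: for any DAG G there is exactly one minimal (in number of edges) subgraph on the same vertex set whose reachability relation equals that of G, and its edge set is a subset of the edges of G. -/

import Mathlib

/-- From a reflexive-transitive path with distinct endpoints, extract a first
step that actually moves. -/
theorem stmt2_first_step {V : Type*} {S : V → V → Prop} {v : V} :
    ∀ {u}, Relation.ReflTransGen S u v → u ≠ v →
      ∃ w, S u w ∧ w ≠ u ∧ Relation.ReflTransGen S w v := by
  intro u h
  induction h using Relation.ReflTransGen.head_induction_on with
  | refl => intro h; exact absurd rfl h
  | head h' h ih =>
    rename_i a c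
    intro hne
    by_cases hca : c = a
    · subst hca; exact ih hne
    · exact ⟨c, h', hca, h⟩

theorem stmt2 {V : Type*} [Fintype V] [DecidableEq V] (E : Finset (V × V))
    (hacyc : ∀ v, ¬ Relation.TransGen (fun a b => (a, b) ∈ E) v v) :
    ∃ E' : Finset (V × V),
      ((∀ u v, Relation.ReflTransGen (fun a b => (a, b) ∈ E') u v ↔
          Relation.ReflTransGen (fun a b => (a, b) ∈ E) u v) ∧
        (∀ E'' : Finset (V × V),
          (∀ u v, Relation.ReflTransGen (fun a b => (a, b) ∈ E'') u v ↔
            Relation.ReflTransGen (fun a b => (a, b) ∈ E) u v) →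
          E'.card ≤ E''.card)) ∧
      E' ⊆ E ∧
      (∀ E'' : Finset (V × V),
        ((∀ u v, Relation.ReflTransGen (fun a b => (a, b) ∈ E'') u v ↔
            Relation.ReflTransGen (fun a b => (a, b) ∈ E) u v) ∧
          (∀ E''' : Finset (V × V),
            (∀ u v, Relation.ReflTransGen (fun a b => (a, b) ∈ E''') u v ↔
              Relation.ReflTransGen (fun a b => (a, b) ∈ E) u v) →
            E''.card ≤ E'''.card)) → E'' = E') := by
  classical
  set R : V → V → Prop := fun a b => Relation.ReflTransGen (fun x y => (x, y) ∈ E) a b with hR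
  have antisym : ∀ u v, R u v → R v u → u = v := by
    intro u v h1 h2
    by_contra hne
    obtain ⟨w, hw, hwne, hwv⟩ := stmt2_first_step h1 hne
    exact hacyc u (Relation.TransGen.head' hw (hwv.trans h2))
  -- cover relation
  set C : V → V → Prop := fun u v =>
    u ≠ v ∧ R u v ∧ ∀ w, R u w → R w v → w = u ∨ w = v with hC
  set E' : Finset (V × V) := Finset.univ.filter (fun p : V × V => C p.1 p.2) with hE'
  have memE' : ∀ p : V × V, p ∈ E' ↔ C p.1 p.2 := by
    intro p; simp [hE']
  -- any edge set with the same reachability contains all cover pairs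
  have covers_sub : ∀ E'' : Finset (V × V),
      (∀ u v, Relation.ReflTransGen (fun a b => (a, b) ∈ E'') u v ↔
        Relation.ReflTransGen (fun a b => (a, b) ∈ E) u v) → E' ⊆ E'' := by
    intro E'' hprop p hp
    obtain ⟨huv, hruv, hcov⟩ := (memE' p).mp hp
    obtain ⟨u, v⟩ := p
    have h2 : Relation.ReflTransGen (fun a b => (a, b) ∈ E'') u v := (hprop u v).mpr hruv
    obtain ⟨w, hw, hwne, hwv⟩ := stmt2_first_step h2 huv
    have hruw : R u w := (hprop u w).mp (Relation.ReflTransGen.single hw)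
    have hrwv : R w v := (hprop w v).mp hwv
    rcases hcov w hruw hrwv with h | h
    · exact absurd h hwne
    · subst h; exact hw
  -- R implies reflexive-transitive closure of cover relation
  have key : ∀ n : ℕ, ∀ u v : V,
      (Finset.univ.filter (fun w => R u w ∧ R w v)).card ≤ n → R u v →
      Relation.ReflTransGen C u v := by
    intro n
    induction n with
    | zero =>
      intro u v hcard hr
      have : v ∈ Finset.univ.filter (fun w => R u w ∧ R w v) := by
        simp only [Finset.mem_filter, Finset.mem_univ, true_and]
        exact ⟨hr, Relation.ReflTransGen.refl⟩
      have := Finset.card_pos.mpr ⟨v, this⟩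
      omega
    | succ n ih =>
      intro u v hcard hr
      by_cases huv : u = v
      · subst huv; exact Relation.ReflTransGen.refl
      by_cases hcov : ∀ w, R u w → R w v → w = u ∨ w = v
      · exact Relation.ReflTransGen.single ⟨huv, hr, hcov⟩
      · push_neg at hcov
        obtain ⟨w, hruw, hrwv, hwu, hwv⟩ := hcov
        have hsub1 : Finset.univ.filter (fun x => R u x ∧ R x w) ⊂
            Finset.univ.filter (fun x => R u x ∧ R x v) := by
          constructor
          · intro x hx
            simp only [Finset.mem_filter, Finset.mem_univ, true_and] at hx ⊢
            exact ⟨hx.1, hx.2.trans hrwv⟩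
          · intro hcontra
            have hv : v ∈ Finset.univ.filter (fun x => R u x ∧ R x v) := by
              simp only [Finset.mem_filter, Finset.mem_univ, true_and]
              exact ⟨hr, Relation.ReflTransGen.refl⟩
            have := hcontra hv
            simp only [Finset.mem_filter, Finset.mem_univ, true_and] at this
            exact hwv (antisym w v hrwv this.2)
        have hsub2 : Finset.univ.filter (fun x => R w x ∧ R x v) ⊂
            Finset.univ.filter (fun x => R u x ∧ R x v) := by
          constructor
          · intro x hx
            simp only [Finset.mem_filter, Finset.mem_univ, true_and] at hx ⊢
            exact ⟨hruw.trans hx.1, hx.2⟩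
          · intro hcontra
            have hu : u ∈ Finset.univ.filter (fun x => R u x ∧ R x v) := by
              simp only [Finset.mem_filter, Finset.mem_univ, true_and]
              exact ⟨Relation.ReflTransGen.refl, hr⟩
            have := hcontra hu
            simp only [Finset.mem_filter, Finset.mem_univ, true_and] at this
            exact hwu (antisym w u this.1 hruw)
        have h1 := Finset.card_lt_card hsub1
        have h2 := Finset.card_lt_card hsub2
        exact (ih u w (by omega) hruw).trans (ih w v (by omega) hrwv)
  have key' : ∀ u v : V, R u v → Relation.ReflTransGen C u v := fun u v hr =>
    key _ u v le_rfl hr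
  -- E' has the same reachability as E
  have hreach : ∀ u v, Relation.ReflTransGen (fun a b => (a, b) ∈ E') u v ↔
      Relation.ReflTransGen (fun a b => (a, b) ∈ E) u v := by
    intro u v
    constructor
    · intro h
      induction h with
      | refl => exact Relation.ReflTransGen.refl
      | tail hab hbc ih =>
        exact ih.trans ((memE' _).mp hbc).2.1
    · intro h
      exact Relation.ReflTransGen.mono (fun a b hab => (memE' (a, b)).mpr hab) u v (key' u v h)
  have hEprop : ∀ u v, Relation.ReflTransGen (fun a b => (a, b) ∈ E) u v ↔
      Relation.ReflTransGen (fun a b => (a, b) ∈ E) u v := fun _ _ => Iff.rfl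
  refine ⟨E', ⟨⟨hreach, fun E'' h => Finset.card_le_card (covers_sub E'' h)⟩,
    covers_sub E hEprop, ?_⟩⟩
  intro E'' ⟨hprop, hmin⟩
  exact (Finset.eq_of_subset_of_card_le (covers_sub E'' hprop) (hmin E' hreach)).symm
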